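/- If F: X → ℝ≥0 is differentiable, monotone, and weakly DR-submodular with parameter γ, then for all x, y in X, F(y) - (1 + 1/γ²)F(x) ≤ (1/γ) ⟨∇F(x), y - x⟩. -/

import Mathlib

open Set

lemma mvt_aux (n : ℕ) (X : Set (EuclideanSpace ℝ (Fin n)))
    (F : EuclideanSpace ℝ (Fin n) → ℝ)
    (g : EuclideanSpace ℝ (Fin n) → EuclideanSpace ℝ (Fin n))
    (hdiff : ∀ x ∈ X, HasGradientAt F (g x) x)
    (hseg : ∀ u ∈ X, ∀ v ∈ X, ∀ t ∈ Set.Icc (0:ℝ) 1, u + t • (v - u) ∈ X)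
    (u : EuclideanSpace ℝ (Fin n)) (hu : u ∈ X)
    (v : EuclideanSpace ℝ (Fin n)) (hv : v ∈ X) :
    ∃ z ∈ X, (∃ t ∈ Set.Icc (0:ℝ) 1, z = u + t • (v - u)) ∧
      F v - F u = ∑ i, g z i * (v i - u i) := by
  set c : ℝ → EuclideanSpace ℝ (Fin n) := fun t => u + t • (v - u) with hc
  have hcder : ∀ t : ℝ, HasDerivAt c (v - u) t := by
    intro t
    have : HasDerivAt (fun t : ℝ => t • (v - u)) ((1:ℝ) • (v - u)) t :=
      (hasDerivAt_id t).smul_const (v - u)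
    rw [one_smul] at this; exact this.const_add u
  have hφ : ∀ t ∈ Set.Icc (0:ℝ) 1,
      HasDerivAt (F ∘ c) (inner ℝ (g (c t)) (v - u) : ℝ) t := by
    intro t ht
    have hz : c t ∈ X := hseg u hu v hv t ht
    have := ((hdiff _ hz).hasFDerivAt).comp_hasDerivAt t (hcder t)
    simpa using this
  have hcont : ContinuousOn (F ∘ c) (Set.Icc (0:ℝ) 1) := by
    intro t ht
    exact ((hφ t ht).continuousAt).continuousWithinAt
  obtain ⟨t₀, ht₀, heq⟩ := exists_hasDerivAt_eq_slope (F ∘ c)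
    (fun t => (inner ℝ (g (c t)) (v - u) : ℝ)) zero_lt_one hcont
    (fun t ht => hφ t (Set.mem_Ioo.mp ht |> fun h => ⟨le_of_lt h.1, le_of_lt h.2⟩))
  refine ⟨c t₀, hseg u hu v hv t₀ ⟨le_of_lt ht₀.1, le_of_lt ht₀.2⟩,
    ⟨t₀, ⟨le_of_lt ht₀.1, le_of_lt ht₀.2⟩, rfl⟩, ?_⟩
  have h1 : (F ∘ c) 1 = F v := by simp [hc]
  have h0 : (F ∘ c) 0 = F u := by simp [hc]
  rw [h1, h0] at heq
  have : (inner ℝ (g (c t₀)) (v - u) : ℝ) = F v - F u := by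
    rw [heq]; ring
  rw [← this]
  simp [PiLp.inner_apply, RCLike.inner_apply, conj_trivial, mul_comm]

theorem stmt_2 (n : ℕ) (a b : Fin n → ℝ) (ha : ∀ i, 0 ≤ a i)
    (X : Set (EuclideanSpace ℝ (Fin n)))
    (hX : X = {x : EuclideanSpace ℝ (Fin n) | ∀ i, x i ∈ Set.Icc (a i) (b i)})
    (F : EuclideanSpace ℝ (Fin n) → ℝ)
    (g : EuclideanSpace ℝ (Fin n) → EuclideanSpace ℝ (Fin n))
    (hF0 : ∀ x ∈ X, 0 ≤ F x)
    (hdiff : ∀ x ∈ X, HasGradientAt F (g x) x)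
    (hmono : ∀ x ∈ X, ∀ y ∈ X, (∀ i, x i ≤ y i) → F x ≤ F y)
    (γ : ℝ) (hγ : 0 < γ)
    (hweak : ∀ x ∈ X, ∀ y ∈ X, (∀ i, x i ≤ y i) → ∀ i, γ * g y i ≤ g x i) :
    ∀ x ∈ X, ∀ y ∈ X,
      F y - (1 + 1 / γ ^ 2) * F x ≤ (1 / γ) * ∑ i, g x i * (y i - x i) := by
  intro x hx y hy
  -- segment closedness
  have hseg : ∀ u ∈ X, ∀ v ∈ X, ∀ t ∈ Set.Icc (0:ℝ) 1, u + t • (v - u) ∈ X := by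
    intro u hu v hv t ht
    rw [hX] at hu hv ⊢
    intro i
    have hui := hu i; have hvi := hv i
    have : (u + t • (v - u)) i = u i + t * (v i - u i) := rfl
    rw [this]
    simp only [Set.mem_Icc] at *
    constructor <;> nlinarith [ht.1, ht.2, hui.1, hui.2, hvi.1, hvi.2]
  -- max and min points
  set p : EuclideanSpace ℝ (Fin n) := WithLp.toLp 2 (fun i => max (x i) (y i)) with hp
  set q : EuclideanSpace ℝ (Fin n) := WithLp.toLp 2 (fun i => min (x i) (y i)) with hq
  have hpX : p ∈ X := by
    rw [hX] at hx hy ⊢; intro i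
    exact ⟨le_max_of_le_left (hx i).1, max_le (hx i).2 (hy i).2⟩
  have hqX : q ∈ X := by
    rw [hX] at hx hy ⊢; intro i
    exact ⟨le_min (hx i).1 (hy i).1, min_le_of_left_le (hx i).2⟩
  have hxp : ∀ i, x i ≤ p i := fun i => le_max_left _ _
  have hyp : ∀ i, y i ≤ p i := fun i => le_max_right _ _
  have hqx : ∀ i, q i ≤ x i := fun i => min_le_left _ _
  -- Lemma A : γ (F p - F x) ≤ ⟨g x, p - x⟩
  obtain ⟨z, hzX, ⟨t, ht, hzt⟩, hzeq⟩ := mvt_aux n X F g hdiff hseg x hx p hpX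
  have hxz : ∀ i, x i ≤ z i := by
    intro i
    have : z i = x i + t * (p i - x i) := by rw [hzt]; rfl
    nlinarith [hxp i, ht.1, ht.2]
  have hA : γ * (F p - F x) ≤ ∑ i, g x i * (p i - x i) := by
    rw [hzeq, Finset.mul_sum]
    apply Finset.sum_le_sum
    intro i _
    have h1 := hweak x hx z hzX hxz i
    have h2 : 0 ≤ p i - x i := by linarith [hxp i]
    nlinarith
  -- Lemma B : ⟨g x, x - q⟩ ≤ (1/γ)(F x - F q)
  obtain ⟨w, hwX, ⟨s, hs, hws⟩, hweq⟩ := mvt_aux n X F g hdiff hseg q hqX x hx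
  have hwx : ∀ i, w i ≤ x i := by
    intro i
    have : w i = q i + s * (x i - q i) := by rw [hws]; rfl
    nlinarith [hqx i, hs.1, hs.2]
  have hB : ∑ i, g x i * (x i - q i) ≤ (1/γ) * (F x - F q) := by
    rw [hweq, Finset.mul_sum]
    apply Finset.sum_le_sum
    intro i _
    have h1 := hweak w hwX x hx hwx i
    have h2 : 0 ≤ x i - q i := by linarith [hqx i]
    rw [div_mul_eq_mul_div, le_div_iff₀ hγ]
    nlinarith
  -- combine
  have hsum : ∑ i, g x i * (y i - x i)
      = ∑ i, g x i * (p i - x i) - ∑ i, g x i * (x i - q i) := by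
    rw [← Finset.sum_sub_distrib]
    apply Finset.sum_congr rfl
    intro i _
    have : p i + q i = x i + y i := max_add_min _ _
    linear_combination (-(g x i)) * this
  have hFpy : F y ≤ F p := hmono y hy p hpX hyp
  have hFq : 0 ≤ F q := hF0 q hqX
  have hFx : 0 ≤ F x := hF0 x hx
  have hkey : γ * (F y - F x) - (1/γ) * F x ≤ ∑ i, g x i * (y i - x i) := by
    rw [hsum]
    have : γ * (F y - F x) ≤ γ * (F p - F x) := by nlinarith
    have hB' : ∑ i, g x i * (x i - q i) ≤ (1/γ) * F x := by
      have : (1/γ) * (F x - F q) ≤ (1/γ) * F x := by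
        apply mul_le_mul_of_nonneg_left (by linarith) (by positivity)
      linarith
    linarith
  have hγne : γ ≠ 0 := ne_of_gt hγ
  have h := mul_le_mul_of_nonneg_left hkey (by positivity : (0:ℝ) ≤ 1/γ)
  have heq : (1/γ) * (γ * (F y - F x) - 1/γ * F x) = F y - (1 + 1/γ^2) * F x := by
    field_simp; ring
  linarith [h, heq.symm.le, heq.le]
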